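/- Let N ≥ 1, R > 0, k_c, k_m > 0 and angles φ₁, φ₂. Then the quantity G = (1/N)·|∑_{n=0}^{N−1} exp(−i·R·(k_m·cos(φ₂ − 2πn/N) − k_c·cos(φ₁ − 2πn/N)))| satisfies G = |∑_{s₁,s₂ ∈ ℤ} i^{s₁+s₂} J_{s₁}(R k_c) J_{s₂}(−R k_m) e^{i(s₁φ₁ + s₂φ₂)} · [N divides s₁+s₂]|, where [·] is 1 if the condition holds and 0 otherwise. -/

import Mathlib

open Complex Finset

/-- Bessel function of the first kind of integer order, via the integral representation. -/
noncomputable def besselJ (n : ℤ) (x : ℝ) : ℝ :=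
  (1 / Real.pi) * ∫ t in (0:ℝ)..Real.pi, Real.cos (n * t - x * Real.sin t)


open Function intervalIntegral

namespace UCA

noncomputable def g (x θ : ℝ) : ℂ := Complex.exp (Complex.I * x * Real.sin θ)
noncomputable def g1 (x θ : ℝ) : ℂ := (Complex.I * x * Real.cos θ) * g x θ
noncomputable def g2 (x θ : ℝ) : ℂ :=
  (Complex.I * x * (-Real.sin θ) + (Complex.I * x * Real.cos θ)^2) * g x θ

lemma g_per (x : ℝ) : Function.Periodic (g x) (2 * Real.pi) := fun θ => by
  simp [g, Real.sin_add_two_pi]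

lemma hasDerivAt_g (x θ : ℝ) : HasDerivAt (g x) (g1 x θ) θ := by
  have h : HasDerivAt (fun θ : ℝ => Complex.I * x * (Real.sin θ : ℂ))
      (Complex.I * x * Real.cos θ) θ :=
    ((Real.hasDerivAt_sin θ).ofReal_comp).const_mul _
  have h2 := h.cexp
  unfold g1 g
  convert h2 using 1
  ring

lemma hasDerivAt_g1 (x θ : ℝ) : HasDerivAt (g1 x) (g2 x θ) θ := by
  have h : HasDerivAt (fun θ : ℝ => Complex.I * x * (Real.cos θ : ℂ))
      (Complex.I * x * (-Real.sin θ)) θ :=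
    by simpa using ((Real.hasDerivAt_cos θ).ofReal_comp).const_mul (Complex.I * x)
  have h2 : HasDerivAt (fun θ : ℝ => (Complex.I * x * (Real.cos θ : ℂ)) * g x θ) _ θ :=
    h.mul (hasDerivAt_g x θ)
  unfold g1 g2 at *
  convert h2 using 1
  ring

lemma norm_g (x θ : ℝ) : ‖g x θ‖ = 1 := by
  simp [g, Complex.norm_exp]

lemma cont_g (x : ℝ) : Continuous (g x) := by
  unfold g; fun_prop

lemma cont_g1 (x : ℝ) : Continuous (g1 x) := by
  unfold g1; have := cont_g x; fun_prop

lemma cont_g2 (x : ℝ) : Continuous (g2 x) := by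
  unfold g2; have := cont_g x; fun_prop

lemma hab : -Real.pi < Real.pi := by linarith [Real.pi_pos]

lemma integral_symm_split (f : ℝ → ℝ) (hf : Continuous f) (a : ℝ) :
    ∫ t in (-a)..a, f t = ∫ t in (0:ℝ)..a, (f (-t) + f t) := by
  have h1 : (∫ t in (0:ℝ)..a, f (-t)) = ∫ t in (-a)..(0:ℝ), f t := by
    simpa using intervalIntegral.integral_comp_neg (a := (0:ℝ)) (b := a) f
  rw [intervalIntegral.integral_add
    (((by fun_prop : Continuous fun t => f (-t))).intervalIntegrable _ _)
    (hf.intervalIntegrable _ _), h1,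
    intervalIntegral.integral_add_adjacent_intervals (hf.intervalIntegrable _ _)
    (hf.intervalIntegrable _ _)]

-- core integral computation
lemma fourierCoeffOn_g (x : ℝ) (n : ℤ) :
    fourierCoeffOn hab (g x) n = (besselJ n x : ℂ) := by
  have hπ : (Real.pi : ℝ) ≠ 0 := Real.pi_ne_zero
  have hπC : (Real.pi : ℂ) ≠ 0 := by exact_mod_cast hπ
  rw [fourierCoeffOn_eq_integral]
  have hint : ∀ θ : ℝ, (fourier (T := Real.pi - -Real.pi) (-n) (θ : AddCircle (Real.pi - -Real.pi))) • g x θ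
      = (Real.cos (x * Real.sin θ - n * θ) : ℂ) + (Real.sin (x * Real.sin θ - n * θ) : ℂ) * Complex.I := by
    intro θ
    rw [fourier_coe_apply, smul_eq_mul, g, ← Complex.exp_add]
    rw [show (2 * (Real.pi:ℂ) * Complex.I * (-n:ℤ) * θ / ((Real.pi - -Real.pi : ℝ):ℂ)
        + Complex.I * x * Real.sin θ) = (((x * Real.sin θ - n * θ : ℝ)):ℂ) * Complex.I by
      push_cast
      field_simp [hπC]
      ring]
    rw [Complex.exp_mul_I, Complex.ofReal_cos, Complex.ofReal_sin]
  simp_rw [hint]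
  rw [intervalIntegral.integral_add (Continuous.intervalIntegrable (by fun_prop) _ _)
    (Continuous.intervalIntegrable (by fun_prop) _ _),
    intervalIntegral.integral_mul_const, intervalIntegral.integral_ofReal,
    intervalIntegral.integral_ofReal]
  have hsin : (∫ θ in (-Real.pi)..Real.pi, Real.sin (x * Real.sin θ - n * θ)) = 0 := by
    rw [integral_symm_split _ (by fun_prop)]
    have : ∀ t : ℝ, Real.sin (x * Real.sin (-t) - n * (-t)) + Real.sin (x * Real.sin t - n * t) = 0 := by
      intro t
      rw [Real.sin_neg]
      rw [show x * -Real.sin t - n * (-t) = -(x * Real.sin t - n * t) by ring, Real.sin_neg]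
      ring
    simp_rw [this, intervalIntegral.integral_zero]
  have hcos : (∫ θ in (-Real.pi)..Real.pi, Real.cos (x * Real.sin θ - n * θ))
      = 2 * ∫ t in (0:ℝ)..Real.pi, Real.cos (n * t - x * Real.sin t) := by
    rw [integral_symm_split _ (by fun_prop)]
    rw [← intervalIntegral.integral_const_mul]
    apply intervalIntegral.integral_congr
    intro t _
    show Real.cos (x * Real.sin (-t) - n * (-t)) + Real.cos (x * Real.sin t - n * t)
      = 2 * Real.cos (n * t - x * Real.sin t)
    rw [Real.sin_neg]
    rw [show x * -Real.sin t - n * (-t) = -(x * Real.sin t - n * t) by ring, Real.cos_neg]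
    rw [show n * t - x * Real.sin t = -(x * Real.sin t - n * t) by ring, Real.cos_neg]
    ring
  rw [hsin, hcos, besselJ]
  push_cast
  rw [Complex.real_smul]
  push_cast
  rw [zero_mul, add_zero]
  field_simp [hπC]
  ring


lemma norm_fourier_apply {T : ℝ} [Fact (0 < T)] (n : ℤ) (z : AddCircle T) :
    ‖fourier n z‖ = 1 := Circle.norm_coe _

lemma coeff_step {f f' : ℝ → ℂ} (hf : ∀ θ, HasDerivAt f (f' θ) θ) (hcont : Continuous f')
    (hper : f Real.pi = f (-Real.pi)) {n : ℤ} (hn : n ≠ 0) :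
    fourierCoeffOn hab f n = 1/(Complex.I * n) * fourierCoeffOn hab f' n := by
  have hπC : (Real.pi : ℂ) ≠ 0 := by exact_mod_cast Real.pi_ne_zero
  have hnC : (n : ℂ) ≠ 0 := Int.cast_ne_zero.mpr hn
  rw [fourierCoeffOn_of_hasDerivAt hab hn (fun θ _ => hf θ) (hcont.intervalIntegrable _ _),
    hper, sub_self, mul_zero, zero_sub]
  push_cast
  field_simp
  ring

lemma norm_coeff_le {f : ℝ → ℂ} {M : ℝ} (hM : ∀ θ, ‖f θ‖ ≤ M) (n : ℤ) :
    ‖fourierCoeffOn hab f n‖ ≤ M := by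
  haveI : Fact ((0:ℝ) < Real.pi - -Real.pi) := ⟨by linarith [Real.pi_pos]⟩
  have hM0 : 0 ≤ M := le_trans (norm_nonneg _) (hM 0)
  rw [fourierCoeffOn_eq_integral, norm_smul]
  have h1 : ‖∫ θ in (-Real.pi)..Real.pi, fourier (-n) (θ : AddCircle (Real.pi - -Real.pi)) • f θ‖
      ≤ M * |Real.pi - -Real.pi| := by
    apply intervalIntegral.norm_integral_le_of_norm_le_const
    intro θ _
    rw [norm_smul, norm_fourier_apply, one_mul]
    exact hM θ
  calc ‖(1 / (Real.pi - -Real.pi) : ℝ)‖ * ‖_‖ ≤ ‖(1 / (Real.pi - -Real.pi) : ℝ)‖ * (M * |Real.pi - -Real.pi|) := by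
        exact mul_le_mul_of_nonneg_left h1 (norm_nonneg _)
    _ = M := by
        rw [Real.norm_eq_abs, abs_div, abs_one]
        rw [abs_of_pos (by linarith [Real.pi_pos] : (0:ℝ) < Real.pi - -Real.pi)]
        field_simp

lemma g_pi_eq (x : ℝ) : g x Real.pi = g x (-Real.pi) := by
  simp [g, Real.sin_pi, Real.sin_neg]

lemma g1_pi_eq (x : ℝ) : g1 x Real.pi = g1 x (-Real.pi) := by
  simp [g1, g, Real.sin_pi, Real.sin_neg, Real.cos_neg]

lemma norm_g2_le (x θ : ℝ) : ‖g2 x θ‖ ≤ |x| + x^2 := by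
  have h1 : ‖g2 x θ‖ = ‖Complex.I * x * (-Real.sin θ) + (Complex.I * x * Real.cos θ)^2‖ := by
    rw [g2, norm_mul]
    have : ‖g x θ‖ = 1 := norm_g x θ
    rw [this, mul_one]
  rw [h1]
  refine le_trans (norm_add_le _ _) (add_le_add ?_ ?_)
  · simp only [Complex.ofReal_neg, norm_neg, norm_mul, Complex.norm_I, one_mul,
      Complex.norm_real, Real.norm_eq_abs]
    calc |x| * |Real.sin θ| ≤ |x| * 1 :=
          mul_le_mul_of_nonneg_left (Real.abs_sin_le_one θ) (abs_nonneg x)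
      _ = |x| := mul_one _
  · rw [norm_pow]
    simp only [norm_mul, Complex.norm_I, one_mul, Complex.norm_real, Real.norm_eq_abs]
    calc (|x| * |Real.cos θ|)^2 ≤ (|x| * 1)^2 := by
          apply pow_le_pow_left₀ (by positivity)
          exact mul_le_mul_of_nonneg_left (Real.abs_cos_le_one θ) (abs_nonneg x)
      _ = x^2 := by rw [mul_one, _root_.sq_abs]
    
lemma summable_norm_coeff (x : ℝ) :
    Summable (fun n : ℤ => ‖fourierCoeffOn hab (g x) n‖) := by
  set M : ℝ := |x| + x^2 with hM
  have hbound : ∀ n : ℤ, n ≠ 0 → ‖fourierCoeffOn hab (g x) n‖ ≤ M * (1/(n:ℝ)^2) := by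
    intro n hn
    have h1 : fourierCoeffOn hab (g x) n = 1/(Complex.I * n) *
        (1/(Complex.I * n) * fourierCoeffOn hab (g2 x) n) := by
      rw [coeff_step (hasDerivAt_g x) (cont_g1 x) (g_pi_eq x) hn,
        coeff_step (hasDerivAt_g1 x) (cont_g2 x) (g1_pi_eq x) hn]
    rw [h1]
    have hnorm : ‖(1/(Complex.I * (n:ℂ)) : ℂ)‖ = 1/|(n:ℝ)| := by
      simp [norm_div, norm_mul, Complex.norm_I]
    rw [norm_mul, norm_mul, hnorm]
    have h2 : ‖fourierCoeffOn hab (g2 x) n‖ ≤ M := norm_coeff_le (fun θ => norm_g2_le x θ) n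
    calc 1/|(n:ℝ)| * (1/|(n:ℝ)| * ‖fourierCoeffOn hab (g2 x) n‖)
        ≤ 1/|(n:ℝ)| * (1/|(n:ℝ)| * M) := by
          apply mul_le_mul_of_nonneg_left _ (by positivity)
          exact mul_le_mul_of_nonneg_left h2 (by positivity)
      _ = M * (1/(n:ℝ)^2) := by
          rw [show (1:ℝ)/(n:ℝ)^2 = 1/|(n:ℝ)|^2 from by rw [_root_.sq_abs]]
          ring
  apply Summable.of_norm_bounded_eventually (g := fun n : ℤ => M * (1/(n:ℝ)^2))
  · exact (Real.summable_one_div_int_pow.mpr one_lt_two).mul_left M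
  · apply Set.Finite.subset (Set.finite_singleton (0:ℤ))
    intro n hn
    simp only [Set.mem_setOf_eq, norm_norm] at hn
    simp only [Set.mem_singleton_iff]
    by_contra h
    exact hn (hbound n h)


noncomputable def F (x : ℝ) : C(AddCircle (2 * Real.pi), ℂ) :=
  ⟨(g_per x).lift, (cont_g x).quotient_liftOn' _⟩

lemma F_coe (x θ : ℝ) : F x (θ : AddCircle (2*Real.pi)) = g x θ :=
  (g_per x).lift_coe θ

instance fact_two_pi_pos : Fact ((0:ℝ) < 2 * Real.pi) := ⟨by positivity⟩

lemma fourierCoeff_F (x : ℝ) (n : ℤ) : fourierCoeff (⇑(F x)) n = (besselJ n x : ℂ) := by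
  have hπ : Real.pi ≠ 0 := Real.pi_ne_zero
  rw [← fourierCoeffOn_g x n, fourierCoeff_eq_intervalIntegral _ n (-Real.pi),
    fourierCoeffOn_eq_integral]
  have hpt : ∀ θ : ℝ, (fourier (T := 2*Real.pi) (-n) (θ : AddCircle (2*Real.pi))) • F x (θ : AddCircle (2*Real.pi))
      = (fourier (T := Real.pi - -Real.pi) (-n) (θ : AddCircle (Real.pi - -Real.pi))) • g x θ := by
    intro θ
    rw [F_coe, fourier_coe_apply, fourier_coe_apply, smul_eq_mul, smul_eq_mul]
    congr 2
    push_cast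
    ring
  simp_rw [hpt]
  rw [Complex.real_smul, Complex.real_smul,
    show (-Real.pi) + 2*Real.pi = Real.pi by ring]
  congr 1
  push_cast
  ring

lemma summable_fourierCoeff_F (x : ℝ) : Summable (fourierCoeff (⇑(F x))) := by
  apply Summable.of_norm
  have : (fun n : ℤ => ‖fourierCoeff (⇑(F x)) n‖) = fun n => ‖fourierCoeffOn hab (g x) n‖ := by
    funext n
    rw [fourierCoeff_F, fourierCoeffOn_g]
  rw [this]
  exact summable_norm_coeff x

lemma summable_J (x : ℝ) : Summable (fun s : ℤ => |besselJ s x|) := by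
  have : (fun s : ℤ => |besselJ s x|) = fun s => ‖fourierCoeffOn hab (g x) s‖ := by
    funext s
    rw [fourierCoeffOn_g, Complex.norm_real, Real.norm_eq_abs]
  rw [this]
  exact summable_norm_coeff x

lemma jacobi_anger_sin (x θ : ℝ) :
    HasSum (fun s : ℤ => (besselJ s x : ℂ) * Complex.exp (Complex.I * s * θ))
      (Complex.exp (Complex.I * x * Real.sin θ)) := by
  have hπC : (Real.pi : ℂ) ≠ 0 := by exact_mod_cast Real.pi_ne_zero
  have h := has_pointwise_sum_fourier_series_of_summable (summable_fourierCoeff_F x)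
    (θ : AddCircle (2*Real.pi))
  rw [show F x (θ : AddCircle (2*Real.pi)) = Complex.exp (Complex.I * x * Real.sin θ) from F_coe x θ] at h
  convert h using 2 with s
  rw [fourierCoeff_F, fourier_coe_apply, smul_eq_mul]
  congr 1
  push_cast
  congr 1
  rw [eq_div_iff (by simp [hπC] : (2*(Real.pi:ℂ)) ≠ 0)]
  ring

lemma exp_pi_div_two_I : Complex.exp ((Real.pi/2 : ℝ) * Complex.I) = Complex.I := by
  rw [Complex.exp_mul_I, ← Complex.ofReal_cos, ← Complex.ofReal_sin,
    Real.cos_pi_div_two, Real.sin_pi_div_two]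
  simp

noncomputable def jaTerm (x u : ℝ) (s : ℤ) : ℂ :=
  Complex.I ^ s * (besselJ s x : ℂ) * Complex.exp (Complex.I * s * u)

lemma jacobi_anger_cos (x u : ℝ) :
    HasSum (jaTerm x u) (Complex.exp (Complex.I * x * Real.cos u)) := by
  unfold jaTerm
  have h := jacobi_anger_sin x (u + Real.pi/2)
  rw [Real.sin_add_pi_div_two] at h
  convert h using 2 with s
  rw [show Complex.I * (s:ℂ) * ((u + Real.pi/2 : ℝ):ℂ)
      = Complex.I * s * u + s * ((Real.pi/2 : ℝ) * Complex.I) by push_cast; ring,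
    Complex.exp_add, Complex.exp_int_mul, exp_pi_div_two_I]
  ring


lemma norm_exp_I_mul (s : ℤ) (θ : ℝ) : ‖Complex.exp (Complex.I * s * θ)‖ = 1 := by
  rw [Complex.norm_exp]
  simp

lemma norm_term (s : ℤ) (x θ : ℝ) :
    ‖Complex.I ^ s * (besselJ s x : ℂ) * Complex.exp (Complex.I * s * θ)‖ = |besselJ s x| := by
  rw [norm_mul, norm_mul, norm_exp_I_mul, norm_zpow, Complex.norm_I, one_zpow,
    Complex.norm_real, Real.norm_eq_abs]
  ring

lemma summable_norm_jaTerm (x u : ℝ) : Summable (fun s : ℤ => ‖jaTerm x u s‖) := by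
  unfold jaTerm
  simpa only [norm_term] using summable_J x

lemma sum_exp_roots (N : ℕ) (hN : 1 ≤ N) (s : ℤ) :
    ∑ n ∈ Finset.range N, Complex.exp (-(Complex.I * s * ((2 * Real.pi * n / N : ℝ) : ℂ)))
      = if (N:ℤ) ∣ s then (N:ℂ) else 0 := by
  have hN0 : (N:ℝ) ≠ 0 := by positivity
  have hN0C : (N:ℂ) ≠ 0 := by exact_mod_cast hN0
  have hπC : (Real.pi : ℂ) ≠ 0 := by exact_mod_cast Real.pi_ne_zero
  have h2πI : (2 * (Real.pi:ℂ) * Complex.I) ≠ 0 := by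
    simp [hπC, Complex.I_ne_zero]
  have hterm : ∀ n ∈ Finset.range N,
      Complex.exp (-(Complex.I * s * ((2 * Real.pi * n / N : ℝ):ℂ)))
      = (Complex.exp (-(2 * Real.pi * Complex.I * s / N)))^n := by
    intro n _
    rw [← Complex.exp_nat_mul]
    congr 1
    push_cast
    ring
  rw [Finset.sum_congr rfl hterm]
  by_cases h : (N:ℤ) ∣ s
  · obtain ⟨k, hk⟩ := h
    have hζ : Complex.exp (-(2 * Real.pi * Complex.I * s / N)) = 1 := by
      rw [show -(2 * (Real.pi:ℂ) * Complex.I * s / N) = ((-k : ℤ):ℂ) * (2 * Real.pi * Complex.I) by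
        rw [hk]; push_cast; field_simp]
      exact Complex.exp_int_mul_two_pi_mul_I _
    simp only [hζ, one_pow, Finset.sum_const, Finset.card_range, nsmul_eq_mul, mul_one]
    simp [hk]
  · have hζN : (Complex.exp (-(2 * Real.pi * Complex.I * s / N)))^N = 1 := by
      rw [← Complex.exp_nat_mul,
        show (N:ℂ) * (-(2 * Real.pi * Complex.I * s / N)) = ((-s:ℤ):ℂ) * (2 * Real.pi * Complex.I) by
          push_cast; field_simp]
      exact Complex.exp_int_mul_two_pi_mul_I _
    have hζ1 : Complex.exp (-(2 * Real.pi * Complex.I * s / N)) ≠ 1 := by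
      intro hc
      rw [Complex.exp_eq_one_iff] at hc
      obtain ⟨k, hk⟩ := hc
      apply h
      have h1 : (2 * (Real.pi:ℂ) * Complex.I) * (s:ℂ)
          = (2 * (Real.pi:ℂ) * Complex.I) * ((-k * N : ℤ):ℂ) := by
        have hk' : -(2 * (Real.pi:ℂ) * Complex.I * s) = (k:ℂ) * (2 * Real.pi * Complex.I) * N := by
          field_simp at hk
          linear_combination (2 * (Real.pi:ℂ) * Complex.I) * hk
        push_cast
        linear_combination -hk'
      have h2 : (s:ℂ) = ((-k * N : ℤ):ℂ) := mul_left_cancel₀ h2πI h1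
      have h3 : s = -k * N := by exact_mod_cast h2
      exact ⟨-k, by rw [h3]; ring⟩
    rw [geom_sum_eq hζ1, hζN]
    simp [h]

end UCA


set_option maxHeartbeats 2000000 in
open UCA in
theorem uca_angular_gain_bessel_series (N : ℕ) (hN : 1 ≤ N) (R kc km φ₁ φ₂ : ℝ)
    (hR : 0 < R) (hkc : 0 < kc) (hkm : 0 < km) :
    (1 / N : ℝ) * ‖∑ n ∈ Finset.range N,
        Complex.exp (-Complex.I * R *
          (km * Real.cos (φ₂ - 2 * Real.pi * n / N) -
           kc * Real.cos (φ₁ - 2 * Real.pi * n / N)))‖ =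
    ‖∑' p : ℤ × ℤ,
        (if (N : ℤ) ∣ (p.1 + p.2) then (1 : ℂ) else 0) *
          Complex.I ^ (p.1 + p.2) * (besselJ p.1 (R * kc) : ℂ) *
          (besselJ p.2 (-(R * km)) : ℂ) *
          Complex.exp (Complex.I * (p.1 * φ₁ + p.2 * φ₂))‖ := by
  have hNR : (N:ℝ) ≠ 0 := by positivity
  have hNC : (N:ℂ) ≠ 0 := by exact_mod_cast hNR
  have hprod : ∀ n : ℕ, HasSum
      (fun p : ℤ×ℤ =>
        jaTerm (R*kc) (φ₁ - 2 * Real.pi * n / N) p.1 *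
        jaTerm (-(R*km)) (φ₂ - 2 * Real.pi * n / N) p.2)
      (Complex.exp (Complex.I * (R*kc : ℝ) * (Real.cos (φ₁ - 2 * Real.pi * n / N) : ℝ)) *
       Complex.exp (Complex.I * ((-(R*km)) : ℝ) * (Real.cos (φ₂ - 2 * Real.pi * n / N) : ℝ))) := by
    intro n
    exact (jacobi_anger_cos (R*kc) (φ₁ - 2 * Real.pi * n / N)).mul
      (jacobi_anger_cos (-(R*km)) (φ₂ - 2 * Real.pi * n / N))
      (summable_mul_of_summable_norm
        (summable_norm_jaTerm (R*kc) (φ₁ - 2 * Real.pi * n / N))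
        (summable_norm_jaTerm (-(R*km)) (φ₂ - 2 * Real.pi * n / N)))
  have hsum_n := hasSum_sum (s := Finset.range N) (fun n _ => hprod n)
  have hfun : ∀ p : ℤ×ℤ,
      (∑ n ∈ Finset.range N,
        jaTerm (R*kc) (φ₁ - 2 * Real.pi * n / N) p.1 *
        jaTerm (-(R*km)) (φ₂ - 2 * Real.pi * n / N) p.2)
      = (N:ℂ) * ((if (N : ℤ) ∣ (p.1 + p.2) then (1 : ℂ) else 0) *
          Complex.I ^ (p.1 + p.2) * (besselJ p.1 (R * kc) : ℂ) *
          (besselJ p.2 (-(R * km)) : ℂ) *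
          Complex.exp (Complex.I * (p.1 * φ₁ + p.2 * φ₂))) := by
    intro p
    have hsplit : ∀ n ∈ Finset.range N,
        jaTerm (R*kc) (φ₁ - 2 * Real.pi * n / N) p.1 *
        jaTerm (-(R*km)) (φ₂ - 2 * Real.pi * n / N) p.2
        = (Complex.I ^ (p.1 + p.2) * (besselJ p.1 (R*kc) : ℂ) * (besselJ p.2 (-(R*km)) : ℂ) *
            Complex.exp (Complex.I * (p.1 * φ₁ + p.2 * φ₂))) *
          Complex.exp (-(Complex.I * (p.1 + p.2 : ℤ) * ((2 * Real.pi * n / N : ℝ):ℂ))) := by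
      intro n _
      unfold jaTerm
      rw [zpow_add₀ Complex.I_ne_zero]
      rw [show Complex.exp (Complex.I * p.1 * ((φ₁ - 2 * Real.pi * n / N : ℝ):ℂ))
          = Complex.exp (Complex.I * p.1 * (φ₁:ℂ)) *
            Complex.exp (-(Complex.I * p.1 * ((2 * Real.pi * n / N : ℝ):ℂ))) from by
        rw [← Complex.exp_add]; congr 1; push_cast; ring]
      rw [show Complex.exp (Complex.I * p.2 * ((φ₂ - 2 * Real.pi * n / N : ℝ):ℂ))
          = Complex.exp (Complex.I * p.2 * (φ₂:ℂ)) *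
            Complex.exp (-(Complex.I * p.2 * ((2 * Real.pi * n / N : ℝ):ℂ))) from by
        rw [← Complex.exp_add]; congr 1; push_cast; ring]
      rw [show Complex.exp (Complex.I * ((p.1:ℂ) * φ₁ + (p.2:ℂ) * φ₂))
          = Complex.exp (Complex.I * p.1 * (φ₁:ℂ)) * Complex.exp (Complex.I * p.2 * (φ₂:ℂ)) from by
        rw [← Complex.exp_add]; congr 1; push_cast; ring]
      rw [show Complex.exp (-(Complex.I * ((p.1 + p.2 : ℤ):ℂ) * ((2 * Real.pi * n / N : ℝ):ℂ)))
          = Complex.exp (-(Complex.I * p.1 * ((2 * Real.pi * n / N : ℝ):ℂ))) *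
            Complex.exp (-(Complex.I * p.2 * ((2 * Real.pi * n / N : ℝ):ℂ))) from by
        rw [← Complex.exp_add]; congr 1; push_cast; ring]
      ring
    rw [Finset.sum_congr rfl hsplit, ← Finset.mul_sum, sum_exp_roots N hN (p.1+p.2)]
    by_cases h : (N:ℤ) ∣ (p.1+p.2) <;> simp only [h, if_true, if_false] <;> ring
  simp_rw [hfun] at hsum_n
  have hdiv := hsum_n.div_const (N:ℂ)
  simp_rw [mul_div_cancel_left₀ _ hNC] at hdiv
  rw [hdiv.tsum_eq]
  have hS : ∀ n ∈ Finset.range N,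
      Complex.exp (-Complex.I * R *
          ((km:ℂ) * (Real.cos (φ₂ - 2 * Real.pi * n / N) : ℝ) -
           (kc:ℂ) * (Real.cos (φ₁ - 2 * Real.pi * n / N) : ℝ)))
      = Complex.exp (Complex.I * (R*kc : ℝ) * (Real.cos (φ₁ - 2 * Real.pi * n / N) : ℝ)) *
        Complex.exp (Complex.I * ((-(R*km)) : ℝ) * (Real.cos (φ₂ - 2 * Real.pi * n / N) : ℝ)) := by
    intro n _
    rw [← Complex.exp_add]
    congr 1
    push_cast
    ring
  rw [Finset.sum_congr rfl hS]
  rw [norm_div, Complex.norm_natCast]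
  field_simp
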